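/- Let d ≥ 2 and 1/d ≤ f ≤ 1 with f > 1/d². Define the d×d symmetric matrix N whose diagonal entries all equal x + y - z and whose off-diagonal entries all equal y, where x = 1/d³ - (1-f)/(d²(d²-1)), y = f(1-df)/(d²(1-d²f)) - (d²f-1)/(d³(d²-1)), and z = (1-df)/(d³(1-d²f)). Then the eigenvalues of N are 0 (with multiplicity 1) and λ₂ = (d²f² + (d³-2d²-d)f + 1)/(d²(d²-1)(d²f-1)) (with multiplicity d-1), and N is positive semidefinite. -/

import Mathlib

theorem dual_feasibility_N_eigenvalues (d : ℕ) (hd : 2 ≤ d) (f : ℝ)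
    (hf0 : 1 / (d : ℝ) ≤ f) (hf1 : f ≤ 1) (hf2 : 1 / (d : ℝ) ^ 2 < f) :
    let x : ℝ := 1 / (d : ℝ) ^ 3 - (1 - f) / ((d : ℝ) ^ 2 * ((d : ℝ) ^ 2 - 1))
    let y : ℝ := f * (1 - (d : ℝ) * f) / ((d : ℝ) ^ 2 * (1 - (d : ℝ) ^ 2 * f))
      - ((d : ℝ) ^ 2 * f - 1) / ((d : ℝ) ^ 3 * ((d : ℝ) ^ 2 - 1))
    let z : ℝ := (1 - (d : ℝ) * f) / ((d : ℝ) ^ 3 * (1 - (d : ℝ) ^ 2 * f))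
    let N : Matrix (Fin d) (Fin d) ℝ := Matrix.of fun i j => if i = j then x + y - z else y
    let lam2 : ℝ := ((d : ℝ) ^ 2 * f ^ 2 + ((d : ℝ) ^ 3 - 2 * (d : ℝ) ^ 2 - (d : ℝ)) * f + 1)
      / ((d : ℝ) ^ 2 * ((d : ℝ) ^ 2 - 1) * ((d : ℝ) ^ 2 * f - 1))
    N.mulVec (fun _ => 1) = 0 ∧
    (∀ v : Fin d → ℝ, ∑ i, v i = 0 → N.mulVec v = lam2 • v) ∧
    N.PosSemidef := by
  intro x y z N lam2
  have hd2 : (2 : ℝ) ≤ (d : ℝ) := by exact_mod_cast hd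
  have hd0 : (d : ℝ) ≠ 0 := by linarith
  have hdpos : (0 : ℝ) < (d : ℝ) := by linarith
  have hdsq : (3 : ℝ) ≤ (d : ℝ) ^ 2 - 1 := by nlinarith
  have hd1 : ((d : ℝ) ^ 2 - 1) ≠ 0 := by linarith
  have hdf : (1 : ℝ) < (d : ℝ) ^ 2 * f := by
    rw [div_lt_iff₀ (by positivity)] at hf2; linarith
  have hdf0 : ((d : ℝ) ^ 2 * f - 1) ≠ 0 := by linarith
  have hdf1 : (1 - (d : ℝ) ^ 2 * f) ≠ 0 := by linarith
  have hdfl : (1 : ℝ) ≤ (d : ℝ) * f := by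
    rw [div_le_iff₀ hdpos] at hf0; linarith
  -- key algebraic identities
  have hA : x - z + (d : ℝ) * y = 0 := by
    show (1 / (d : ℝ) ^ 3 - (1 - f) / ((d : ℝ) ^ 2 * ((d : ℝ) ^ 2 - 1)))
      - (1 - (d : ℝ) * f) / ((d : ℝ) ^ 3 * (1 - (d : ℝ) ^ 2 * f))
      + (d : ℝ) * (f * (1 - (d : ℝ) * f) / ((d : ℝ) ^ 2 * (1 - (d : ℝ) ^ 2 * f))
      - ((d : ℝ) ^ 2 * f - 1) / ((d : ℝ) ^ 3 * ((d : ℝ) ^ 2 - 1))) = 0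
    field_simp
    ring
  have hB : x - z = lam2 := by
    show (1 / (d : ℝ) ^ 3 - (1 - f) / ((d : ℝ) ^ 2 * ((d : ℝ) ^ 2 - 1)))
      - (1 - (d : ℝ) * f) / ((d : ℝ) ^ 3 * (1 - (d : ℝ) ^ 2 * f))
      = ((d : ℝ) ^ 2 * f ^ 2 + ((d : ℝ) ^ 3 - 2 * (d : ℝ) ^ 2 - (d : ℝ)) * f + 1)
      / ((d : ℝ) ^ 2 * ((d : ℝ) ^ 2 - 1) * ((d : ℝ) ^ 2 * f - 1))
    field_simp
    ring
  have key : ∀ v : Fin d → ℝ, ∀ i, N.mulVec v i = (x - z) * v i + y * ∑ j, v j := by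
    intro v i
    simp only [N, Matrix.mulVec, Matrix.of_apply, dotProduct]
    have h : ∀ j, (if i = j then x + y - z else y) * v j
        = (if i = j then (x - z) * v j else 0) + y * v j := by
      intro j; split <;> ring
    rw [Finset.sum_congr rfl fun j _ => h j, Finset.sum_add_distrib,
      Finset.sum_ite_eq, Finset.mul_sum]
    simp
  have hlam2 : 0 ≤ lam2 := by
    have hnum : 0 ≤ (d : ℝ) ^ 2 * f ^ 2 + ((d : ℝ) ^ 3 - 2 * (d : ℝ) ^ 2 - (d : ℝ)) * f + 1 := by
      nlinarith [sq_nonneg ((d : ℝ) * f - 1), mul_nonneg (sub_nonneg.2 hdfl) (sub_nonneg.2 hd2),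
        sq_nonneg ((d : ℝ) - 1), mul_nonneg (sub_nonneg.2 hdfl) (sq_nonneg ((d : ℝ) - 1))]
    have hden : 0 < (d : ℝ) ^ 2 * ((d : ℝ) ^ 2 - 1) * ((d : ℝ) ^ 2 * f - 1) := by
      apply mul_pos (mul_pos (by positivity) (by linarith)) (by linarith)
    exact div_nonneg hnum hden.le
  have hy : y = -(x - z) / d := by
    field_simp
    linarith [hA]
  refine ⟨?_, ?_, Matrix.posSemidef_iff_dotProduct_mulVec.mpr ⟨?_, ?_⟩⟩
  · funext i
    rw [key]
    simp [Finset.card_univ]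
    linarith [hA]
  · intro v hv
    funext i
    rw [key, hv, hB]
    simp [mul_comm]
  · show N.conjTranspose = N
    ext i j
    simp only [N, Matrix.conjTranspose_apply, Matrix.of_apply, star_trivial]
    by_cases h : i = j <;> simp [h, eq_comm]
  · intro v
    have hdot : dotProduct (star v) (N.mulVec v)
        = (x - z) * (∑ i, v i ^ 2) + y * (∑ i, v i) ^ 2 := by
      simp only [dotProduct, star_trivial, Pi.star_apply]
      have h1 : ∀ i ∈ Finset.univ, v i * N.mulVec v i
          = (x - z) * v i ^ 2 + y * ((∑ j, v j) * v i) := by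
        intro i _; rw [key]; ring
      rw [Finset.sum_congr rfl h1, Finset.sum_add_distrib, ← Finset.mul_sum,
        ← Finset.mul_sum, ← Finset.mul_sum]
      ring
    have hcs : (∑ i, v i) ^ 2 ≤ (d : ℝ) * ∑ i, v i ^ 2 := by
      have := sq_sum_le_card_mul_sum_sq (s := (Finset.univ : Finset (Fin d))) (f := v)
      simpa [Finset.card_univ] using this
    rw [hdot, hy, hB]
    have h3 : lam2 * ∑ i, v i ^ 2 + -lam2 / (d : ℝ) * (∑ i, v i) ^ 2
        = lam2 * ((d : ℝ) * ∑ i, v i ^ 2 - (∑ i, v i) ^ 2) / (d : ℝ) := by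
      field_simp
      ring
    rw [h3]
    exact div_nonneg (mul_nonneg hlam2 (by linarith)) hdpos.le
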